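/- Every Polish space X is homeomorphic to a closed subset Z of ℝ^ℕ such that for every ε > 0 there exists a continuous map g : ℝ^ℕ → ℝ^ℕ with d(g(x), x) ≤ ε for all x ∈ ℝ^ℕ and with image disjoint from Z, where d is the metric d(x,y) = Σ_{n∈ℕ} 2^{-n} · min(1, |x n − y n|). -/

import Mathlib

open Topology Metric Set Filter TopologicalSpace

section Aux
variable {X : Type*} [MetricSpace X] (u : ℕ → X)

noncomputable def polE (x : X) : ℕ → ℝ := fun n => dist x (u n)

lemma polE_cont : Continuous (polE u) :=
  continuous_pi fun n => continuous_id.dist continuous_const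

lemma polE_isEmbedding (hu : DenseRange u) : Topology.IsEmbedding (polE u) := by
  have hc := polE_cont u
  have hind : Topology.IsInducing (polE u) := by
    rw [Topology.isInducing_iff_nhds]
    intro x
    refine le_antisymm hc.continuousAt.le_comap (fun s hs => ?_)
    rcases Metric.mem_nhds_iff.1 hs with ⟨ε, εpos, hball⟩
    obtain ⟨n, hn⟩ : ∃ n, dist x (u n) < ε / 3 := by
      rcases Metric.mem_closure_range_iff.1 (hu x) (ε/3) (by linarith) with ⟨n, hn⟩
      exact ⟨n, hn⟩
    refine Filter.mem_comap.2 ⟨{a | dist (a n) (polE u x n) < ε/3}, ?_, ?_⟩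
    · have : IsOpen {a : ℕ → ℝ | dist (a n) (polE u x n) < ε/3} := by
        have : {a : ℕ → ℝ | dist (a n) (polE u x n) < ε/3} =
            (fun a : ℕ → ℝ => a n) ⁻¹' Metric.ball (polE u x n) (ε/3) := rfl
        rw [this]
        exact isOpen_ball.preimage (continuous_apply n)
      refine this.mem_nhds ?_
      simp only [mem_setOf_eq, dist_self]
      linarith
    · intro y hy
      simp only [mem_preimage, mem_setOf_eq, polE, Real.dist_eq] at hy
      apply hball
      have h1 : dist y (u n) < dist x (u n) + ε/3 := by
        have := abs_lt.1 hy; linarith [this.2, this.1]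
      have : dist y x ≤ dist y (u n) + dist (u n) x := dist_triangle _ _ _
      rw [mem_ball]
      rw [dist_comm (u n) x] at this
      linarith
  refine ⟨hind, fun x y hxy => ?_⟩
  have key : ∀ ε > 0, dist x y ≤ 2 * ε := by
    intro ε hε
    rcases Metric.mem_closure_range_iff.1 (hu x) ε hε with ⟨n, hn⟩
    have h2 : dist y (u n) = dist x (u n) := by
      have := congrFun hxy n; simpa [polE] using this.symm
    calc dist x y ≤ dist x (u n) + dist (u n) y := dist_triangle _ _ _
      _ = dist x (u n) + dist y (u n) := by rw [dist_comm (u n) y]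
      _ ≤ ε + ε := by rw [h2]; linarith
      _ = 2 * ε := by ring
  have h0 : dist x y ≤ 0 := by
    by_contra h
    push_neg at h
    have := key (dist x y / 4) (by linarith)
    linarith
  exact dist_le_zero.1 h0

def WSet (k : ℕ) : Set (ℕ → ℝ) := {a | ∃ n, a n < 1/(k+1)}

lemma WSet_open (k : ℕ) : IsOpen (WSet k) := by
  have : WSet k = ⋃ n, (fun a : ℕ → ℝ => a n) ⁻¹' Set.Iio (1/(k+1)) := by
    ext a; simp [WSet]
  rw [this]
  exact isOpen_iUnion fun n => isOpen_Iio.preimage (continuous_apply n)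

lemma WSet_compl_nonempty (k : ℕ) : ((WSet k)ᶜ).Nonempty := by
  refine ⟨fun _ => 1, ?_⟩
  simp only [WSet, mem_compl_iff, mem_setOf_eq, not_exists, not_lt]
  intro n
  rw [div_le_one (by positivity)]
  have : (0:ℝ) ≤ k := Nat.cast_nonneg k
  linarith

lemma polE_mem_WSet (hu : DenseRange u) (x : X) (k : ℕ) : polE u x ∈ WSet k := by
  rcases Metric.mem_closure_range_iff.1 (hu x) (1/(k+1)) (by positivity) with ⟨n, hn⟩
  exact ⟨n, hn⟩

lemma range_polE_eq (hu : DenseRange u) [CompleteSpace X] :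
    Set.range (polE u) = closure (Set.range (polE u)) ∩ ⋂ k, WSet k := by
  apply Subset.antisymm
  · intro a ⟨x, hx⟩
    refine ⟨subset_closure ⟨x, hx⟩, mem_iInter.2 fun k => ?_⟩
    rw [← hx]; exact polE_mem_WSet u hu x k
  rintro a ⟨hacl, haW⟩
  -- inequalities passing to the closure
  have hS : ∀ n m, a n ≤ a m + dist (u m) (u n) ∧ dist (u m) (u n) ≤ a m + a n ∧ 0 ≤ a n := by
    have hclosed : IsClosed {a : ℕ → ℝ | ∀ n m, a n ≤ a m + dist (u m) (u n) ∧
        dist (u m) (u n) ≤ a m + a n ∧ 0 ≤ a n} := by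
      have heq : {a : ℕ → ℝ | ∀ n m, a n ≤ a m + dist (u m) (u n) ∧
          dist (u m) (u n) ≤ a m + a n ∧ 0 ≤ a n} = ⋂ n, ⋂ m, {a : ℕ → ℝ |
          a n ≤ a m + dist (u m) (u n) ∧ dist (u m) (u n) ≤ a m + a n ∧ 0 ≤ a n} := by
        ext b; simp only [mem_iInter, mem_setOf_eq]
      rw [heq]
      refine isClosed_iInter fun n => isClosed_iInter fun m => ?_
      refine IsClosed.inter ?_ (IsClosed.inter ?_ ?_)
      · exact isClosed_le (continuous_apply n) ((continuous_apply m).add continuous_const)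
      · exact isClosed_le continuous_const ((continuous_apply m).add (continuous_apply n))
      · exact isClosed_le continuous_const (continuous_apply n)
    have hsub : Set.range (polE u) ⊆ {a : ℕ → ℝ | ∀ n m, a n ≤ a m + dist (u m) (u n) ∧
        dist (u m) (u n) ≤ a m + a n ∧ 0 ≤ a n} := by
      rintro _ ⟨x, rfl⟩
      intro n m
      simp only [polE]
      refine ⟨dist_triangle x (u m) (u n), ?_, dist_nonneg⟩
      have h1 : dist (u m) (u n) ≤ dist (u m) x + dist x (u n) := dist_triangle _ _ _
      rw [dist_comm (u m) x] at h1
      exact h1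
    exact (hclosed.closure_subset_iff.2 hsub) hacl
  -- choose witnesses
  have hwit : ∀ k : ℕ, ∃ n, a n < 1/(k+1) := fun k => mem_iInter.1 haW k
  choose nk hnk using hwit
  -- the sequence u (nk k) is Cauchy
  have hcauchy : CauchySeq (fun k => u (nk k)) := by
    rw [Metric.cauchySeq_iff]
    intro ε hε
    obtain ⟨N, hN⟩ : ∃ N : ℕ, 2/(N+1) < ε := by
      obtain ⟨N, hN⟩ := exists_nat_gt (2/ε)
      refine ⟨N, ?_⟩
      rw [div_lt_iff₀ (by positivity)]
      rw [div_lt_iff₀ hε] at hN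
      nlinarith
    refine ⟨N, fun k hk l hl => ?_⟩
    have h1 : a (nk k) < 1/(k+1) := hnk k
    have h2 : a (nk l) < 1/(l+1) := hnk l
    have h3 : dist (u (nk l)) (u (nk k)) ≤ a (nk l) + a (nk k) := (hS (nk k) (nk l)).2.1
    have hk1 : (1:ℝ)/(k+1) ≤ 1/(N+1) := by
      apply one_div_le_one_div_of_le (by positivity)
      exact_mod_cast by omega
    have hl1 : (1:ℝ)/(l+1) ≤ 1/(N+1) := by
      apply one_div_le_one_div_of_le (by positivity)
      exact_mod_cast by omega
    rw [dist_comm]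
    calc dist (u (nk l)) (u (nk k)) ≤ a (nk l) + a (nk k) := h3
      _ < 1/(l+1) + 1/(k+1) := by linarith
      _ ≤ 1/(N+1) + 1/(N+1) := by linarith
      _ = 2/(N+1) := by ring
      _ < ε := hN
  obtain ⟨y, hy⟩ := cauchySeq_tendsto_of_complete hcauchy
  refine ⟨y, ?_⟩
  funext m
  -- dist (u (nk k)) (u m) → a m  and  → dist y (u m)
  have lim1 : Tendsto (fun k => dist (u (nk k)) (u m)) atTop (𝓝 (dist y (u m))) :=
    (continuous_id.dist continuous_const).continuousAt.tendsto.comp hy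
  have lim2 : Tendsto (fun k => dist (u (nk k)) (u m)) atTop (𝓝 (a m)) := by
    have hsq : ∀ k, |dist (u (nk k)) (u m) - a m| ≤ 1/(k+1) := by
      intro k
      rw [abs_sub_le_iff]
      constructor
      · have := (hS m (nk k)).2.1  -- dist (u (nk k)) (u m) ≤ a (nk k) + a m
        have h1 := (hnk k).le
        linarith
      · have := (hS m (nk k)).1  -- a m ≤ a (nk k) + dist (u (nk k)) (u m)
        have h1 := (hnk k).le
        linarith
    rw [Metric.tendsto_atTop]
    intro ε hε
    obtain ⟨N, hN⟩ : ∃ N : ℕ, 1/((N:ℝ)+1) < ε := by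
      obtain ⟨N, hN⟩ := exists_nat_gt (1/ε)
      refine ⟨N, ?_⟩
      rw [div_lt_iff₀ (by positivity)]
      rw [div_lt_iff₀ hε] at hN
      nlinarith
    refine ⟨N, fun k hk => ?_⟩
    rw [Real.dist_eq]
    calc |dist (u (nk k)) (u m) - a m| ≤ 1/(k+1) := hsq k
      _ ≤ 1/(N+1) := by
          apply one_div_le_one_div_of_le (by positivity)
          exact_mod_cast by omega
      _ < ε := hN
  have : dist y (u m) = a m := tendsto_nhds_unique lim1 lim2
  simpa [polE] using this

noncomputable def metPi : MetricSpace (ℕ → ℝ) := PiCountable.metricSpace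

lemma infDist_polE_pos (hu : DenseRange u) (x : X) (k : ℕ) :
    0 < @Metric.infDist _ metPi.toPseudoMetricSpace (polE u x) (WSet k)ᶜ := by
  letI := metPi
  refine ((WSet_open k).isClosed_compl.notMem_iff_infDist_pos (WSet_compl_nonempty k)).1 ?_
  simp only [mem_compl_iff, not_not]
  exact polE_mem_WSet u hu x k

/-- The closed embedding of `X` into `ℝ^ℕ`. -/
noncomputable def polG (x : X) : ℕ → ℝ := fun m =>
  if m % 3 = 0 then dist x (u (m/3))
  else if m % 3 = 1 then 1 / @Metric.infDist _ metPi.toPseudoMetricSpace (polE u x) (WSet (m/3))ᶜ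
  else 0

lemma polG_cont (hu : DenseRange u) : Continuous (polG u) := by
  refine continuous_pi fun m => ?_
  unfold polG
  split_ifs
  · exact continuous_id.dist continuous_const
  · refine continuous_const.div ?_ ?_
    · letI := metPi
      exact (continuous_infDist_pt _).comp (polE_cont u)
    · intro x
      exact (infDist_polE_pos u hu x _).ne'
  · exact continuous_const

lemma polG_comp_eq (x : X) : (fun n => polG u x (3*n)) = polE u x := by
  funext n
  simp only [polG, polE]
  have h0 : (3*n) % 3 = 0 := by omega
  have h1 : (3*n) / 3 = n := by omega
  rw [if_pos h0, h1]

lemma polG_isEmbedding (hu : DenseRange u) : Topology.IsEmbedding (polG u) := by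
  have hc := polG_cont u hu
  have hind : Topology.IsInducing (polG u) := by
    refine Topology.IsInducing.of_comp hc (continuous_pi fun n => continuous_apply (3*n)) ?_
    have : (fun a : ℕ → ℝ => fun n => a (3*n)) ∘ polG u = polE u := by
      funext x
      exact polG_comp_eq u x
    rw [this]
    exact (polE_isEmbedding u hu).toIsInducing
  refine ⟨hind, fun x y hxy => ?_⟩
  apply (polE_isEmbedding u hu).injective
  rw [← polG_comp_eq u x, ← polG_comp_eq u y, hxy]

lemma polG_range_closed (hu : DenseRange u) [CompleteSpace X] :
    IsClosed (Set.range (polG u)) := by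
  letI := metPi
  refine IsSeqClosed.isClosed ?_
  intro v z hmem htend
  choose x hx using hmem
  have hv : ∀ j, v j = polG u (x j) := fun j => (hx j).symm
  -- coordinatewise convergence
  have hcoord : ∀ m, Tendsto (fun j => polG u (x j) m) atTop (𝓝 (z m)) := by
    intro m
    have h1 := (tendsto_pi_nhds.1 htend) m
    refine h1.congr fun j => ?_
    rw [hv j]
  -- the limit of the polE part
  set a : ℕ → ℝ := fun n => z (3*n) with ha
  have hEtend : Tendsto (fun j => polE u (x j)) atTop (𝓝 a) := by
    rw [tendsto_pi_nhds]
    intro n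
    have := hcoord (3*n)
    refine this.congr fun j => ?_
    rw [← polG_comp_eq u (x j)]
  have hacl : a ∈ closure (Set.range (polE u)) :=
    mem_closure_of_tendsto hEtend (Eventually.of_forall fun j => ⟨x j, rfl⟩)
  -- infDist part: a is in every W k
  have htk : ∀ k, Tendsto (fun j => Metric.infDist (polE u (x j)) (WSet k)ᶜ) atTop
      (𝓝 (Metric.infDist a (WSet k)ᶜ)) := by
    intro k
    exact ((continuous_infDist_pt ((WSet k)ᶜ)).continuousAt.tendsto).comp hEtend
  have hbk : ∀ k, Tendsto (fun j => polG u (x j) (3*k+1)) atTop (𝓝 (z (3*k+1))) :=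
    fun k => hcoord (3*k+1)
  have hGval : ∀ j k, polG u (x j) (3*k+1)
      = 1 / Metric.infDist (polE u (x j)) (WSet k)ᶜ := by
    intro j k
    simp only [polG]
    have h0 : (3*k+1) % 3 = 1 := by omega
    have h1 : (3*k+1) / 3 = k := by omega
    rw [if_neg (by omega), if_pos h0, h1]
  have haW : ∀ k, 0 < Metric.infDist a (WSet k)ᶜ := by
    intro k
    have hnn : 0 ≤ Metric.infDist a (WSet k)ᶜ := Metric.infDist_nonneg
    rcases lt_or_eq_of_le hnn with h | h
    · exact h
    exfalso
    -- then 1 = b_j * t_j → z(3k+1) * 0 = 0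
    have hone : ∀ j, polG u (x j) (3*k+1) * Metric.infDist (polE u (x j)) (WSet k)ᶜ = 1 := by
      intro j
      rw [hGval j k]
      field_simp [(infDist_polE_pos u hu (x j) k).ne']
    have hlim : Tendsto (fun j => polG u (x j) (3*k+1) *
        Metric.infDist (polE u (x j)) (WSet k)ᶜ) atTop (𝓝 (z (3*k+1) * 0)) := by
      refine (hbk k).mul ?_
      rw [h]
      exact htk k
    rw [mul_zero] at hlim
    have : Tendsto (fun _ : ℕ => (1:ℝ)) atTop (𝓝 (0:ℝ)) := hlim.congr fun j => hone j
    have h01 : (0:ℝ) = 1 := tendsto_nhds_unique this tendsto_const_nhds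
    norm_num at h01
  have haWmem : ∀ k, a ∈ WSet k := by
    intro k
    by_contra hmem
    have : a ∈ (WSet k)ᶜ := hmem
    have := Metric.infDist_zero_of_mem this
    linarith [haW k]
  -- hence a is in the range of polE
  have : a ∈ Set.range (polE u) := by
    rw [range_polE_eq u hu]
    exact ⟨hacl, mem_iInter.2 haWmem⟩
  obtain ⟨y, hy⟩ := this
  refine ⟨y, ?_⟩
  funext m
  have h3 : m % 3 = 0 ∨ m % 3 = 1 ∨ m % 3 = 2 := by omega
  rcases h3 with h3 | h3 | h3
  · -- coordinate of type 3q
    have h1 : polG u y m = polE u y (m/3) := by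
      simp only [polG, polE, if_pos h3]
    rw [h1, hy]
    show z (3 * (m/3)) = z m
    congr 1
    omega
  · -- coordinate of type 3q+1 : value 1 / infDist
    have hm : m = 3 * (m/3) + 1 := by omega
    set k := m / 3
    have hlim2 : Tendsto (fun j => polG u (x j) (3*k+1)) atTop
        (𝓝 (1 / Metric.infDist a (WSet k)ᶜ)) := by
      have := (htk k)
      have hinv : Tendsto (fun j => 1 / Metric.infDist (polE u (x j)) (WSet k)ᶜ) atTop
          (𝓝 (1 / Metric.infDist a (WSet k)ᶜ)) :=
        tendsto_const_nhds.div this (haW k).ne'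
      refine hinv.congr fun j => (hGval j k).symm
    have hzval : z (3*k+1) = 1 / Metric.infDist a (WSet k)ᶜ :=
      tendsto_nhds_unique (hbk k) hlim2
    simp only [polG, if_neg (by omega : ¬ m % 3 = 0), if_pos h3]
    rw [hy, ← hzval]
    congr 1
    omega
  · -- coordinate of type 3q+2 : value 0
    have hzval : z m = 0 := by
      have : Tendsto (fun j => polG u (x j) m) atTop (𝓝 0) := by
        have hval : ∀ j, polG u (x j) m = 0 := by
          intro j
          simp only [polG, if_neg (by omega : ¬ m % 3 = 0), if_neg (by omega : ¬ m % 3 = 1)]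
        exact tendsto_const_nhds.congr fun j => (hval j).symm
      exact tendsto_nhds_unique (hcoord m) this
    rw [hzval]
    simp only [polG, if_neg (by omega : ¬ m % 3 = 0), if_neg (by omega : ¬ m % 3 = 1)]


end Aux

lemma continuous_of_isEmpty {α β : Type*} [TopologicalSpace α] [TopologicalSpace β]
    [IsEmpty α] (f : α → β) : Continuous f :=
  ⟨fun s _ => by rw [Set.eq_empty_of_isEmpty (f ⁻¹' s)]; exact isOpen_empty⟩

/-- The metric `d(x,y) = Σ_{n∈ℕ} 2^{-n} · min(1, |x n − y n|)` on `ℝ^ℕ`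
(which induces the product topology). -/
noncomputable def dSeq (x y : ℕ → ℝ) : ℝ :=
  ∑' n : ℕ, (2 : ℝ) ^ (-(n : ℤ)) * min 1 |x n - y n|

lemma dSeq_self (x : ℕ → ℝ) : dSeq x x = 0 := by
  simp [dSeq]

lemma dSeq_update_le (x : ℕ → ℝ) (k : ℕ) :
    dSeq (Function.update x k 1) x ≤ (2:ℝ) ^ (-(k:ℤ)) := by
  rw [dSeq, tsum_eq_single k]
  · rw [Function.update_self]
    calc (2:ℝ) ^ (-(k:ℤ)) * min 1 |1 - x k| ≤ (2:ℝ) ^ (-(k:ℤ)) * 1 := by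
          apply mul_le_mul_of_nonneg_left (min_le_left _ _) (by positivity)
      _ = (2:ℝ) ^ (-(k:ℤ)) := mul_one _
  · intro n hn
    rw [Function.update_of_ne hn]
    simp

theorem stmt11 (X : Type*) [TopologicalSpace X] [PolishSpace X] :
    ∃ Z : Set (ℕ → ℝ), IsClosed Z ∧ Nonempty (X ≃ₜ Z) ∧
      ∀ ε > (0 : ℝ), ∃ g : (ℕ → ℝ) → (ℕ → ℝ), Continuous g ∧
        (∀ x, dSeq (g x) x ≤ ε) ∧ ∀ x, g x ∉ Z := by
  cases isEmpty_or_nonempty X with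
  | inl h =>
    refine ⟨∅, isClosed_empty, ⟨⟨Equiv.equivOfIsEmpty X _,
      continuous_of_isEmpty _, continuous_of_isEmpty _⟩⟩, fun ε hε => ?_⟩
    exact ⟨id, continuous_id, fun x => by rw [id, dSeq_self]; exact hε.le,
      fun x => notMem_empty _⟩
  | inr h =>
    letI := upgradeIsCompletelyMetrizable X
    obtain ⟨u, hu⟩ := TopologicalSpace.exists_dense_seq X
    refine ⟨Set.range (polG u), polG_range_closed u hu, 
      ⟨Topology.IsEmbedding.toHomeomorph (polG_isEmbedding u hu)⟩, fun ε hε => ?_⟩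
    obtain ⟨n, hn⟩ : ∃ n : ℕ, ((1:ℝ)/2) ^ n < ε :=
      exists_pow_lt_of_lt_one hε (by norm_num)
    set k := 3 * n + 2 with hk
    refine ⟨fun x => Function.update x k 1, ?_, ?_, ?_⟩
    · refine continuous_pi fun m => ?_
      by_cases hm : m = k
      · simpa [Function.update_apply, hm] using (continuous_const : Continuous fun _ : ℕ → ℝ => (1:ℝ))
      · simpa [Function.update_apply, hm] using continuous_apply m
    · intro x
      refine (dSeq_update_le x k).trans ?_
      have h1 : (2:ℝ) ^ (-(k:ℤ)) = ((1:ℝ)/2) ^ k := by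
        rw [zpow_neg, zpow_natCast, one_div, inv_pow]
      rw [h1]
      calc ((1:ℝ)/2) ^ k ≤ ((1:ℝ)/2) ^ n := by
            apply pow_le_pow_of_le_one (by norm_num) (by norm_num)
            omega
        _ ≤ ε := hn.le
    · rintro x ⟨y, hy⟩
      have h1 : polG u y k = 0 := by
        simp only [polG, if_neg (by omega : ¬ k % 3 = 0), if_neg (by omega : ¬ k % 3 = 1)]
      rw [hy] at h1
      simp only [Function.update_self] at h1
      norm_num at h1
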